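/- The equation (X² − I)² = A, where A is the 2×2 matrix with rows (1,0) and (0,0), has exactly 6 solutions X in M₂(ℝ). -/
import Mathlib

open Matrix

lemma fin2_ext_iff (a b c d a' b' c' d' : ℝ) :
    !![a,b;c,d] = !![a',b';c',d'] ↔ a = a' ∧ b = b' ∧ c = c' ∧ d = d' := by
  constructor
  · intro h
    refine ⟨?_, ?_, ?_, ?_⟩
    · simpa using congrFun (congrFun h 0) 0
    · simpa using congrFun (congrFun h 0) 1
    · simpa using congrFun (congrFun h 1) 0
    · simpa using congrFun (congrFun h 1) 1
  · rintro ⟨rfl, rfl, rfl, rfl⟩; rfl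

lemma key_diag (a d : ℝ) :
    (!![a,0;0,d] ^ 2 - 1) ^ 2 = !![(a*a-1)*(a*a-1), 0; 0, (d*d-1)*(d*d-1)] := by
  ext i j
  fin_cases i <;> fin_cases j <;>
    simp [pow_two, Matrix.mul_apply, Matrix.sub_apply, Matrix.one_apply,
      Fin.sum_univ_two]

theorem stmt_18 :
    {X : Matrix (Fin 2) (Fin 2) ℝ | (X ^ 2 - 1) ^ 2 = !![1, 0; 0, 0]}.encard = 6 := by
  have h2 : Real.sqrt 2 ^ 2 = 2 := Real.sq_sqrt (by norm_num)
  have hm : Real.sqrt 2 * Real.sqrt 2 = 2 := Real.mul_self_sqrt (by norm_num)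
  have hs : (0:ℝ) < Real.sqrt 2 := Real.sqrt_pos.mpr (by norm_num)
  have hset : {X : Matrix (Fin 2) (Fin 2) ℝ | (X ^ 2 - 1) ^ 2 = !![1, 0; 0, 0]} =
      {!![Real.sqrt 2,0;0,1], !![Real.sqrt 2,0;0,-1], !![-Real.sqrt 2,0;0,1],
       !![-Real.sqrt 2,0;0,-1], !![0,0;0,1], !![0,0;0,-1]} := by
    ext X
    simp only [Set.mem_setOf_eq, Set.mem_insert_iff, Set.mem_singleton_iff]
    constructor
    · intro h
      obtain ⟨a, b, c, d, rfl⟩ : ∃ a b c d, X = !![a,b;c,d] :=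
        ⟨_, _, _, _, by ext i j; fin_cases i <;> fin_cases j <;> rfl⟩
      have h00 := congrFun (congrFun h 0) 0
      have h01 := congrFun (congrFun h 0) 1
      have h10 := congrFun (congrFun h 1) 0
      have h11 := congrFun (congrFun h 1) 1
      simp [pow_two, Matrix.mul_apply, Matrix.sub_apply, Matrix.one_apply,
        Fin.sum_univ_two] at h00 h01 h10 h11
      have hsum : (a^2 + b*c - 1) + (d^2 + b*c - 1) ≠ 0 := by
        intro hz
        nlinarith [h00, h11]
      have ht : a + d ≠ 0 := by
        intro hz
        have hd : d = -a := by linarith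
        subst hd
        nlinarith [h00, h11]
      have hb : b = 0 := by
        have hfac : b * ((a + d) * ((a^2 + b*c - 1) + (d^2 + b*c - 1))) = 0 := by
          linear_combination h01
        rcases mul_eq_zero.mp hfac with h' | h'
        · exact h'
        · rcases mul_eq_zero.mp h' with h'' | h''
          · exact absurd h'' ht
          · exact absurd h'' hsum
      have hc : c = 0 := by
        have hfac : c * ((a + d) * ((a^2 + b*c - 1) + (d^2 + b*c - 1))) = 0 := by
          linear_combination h10
        rcases mul_eq_zero.mp hfac with h' | h'
        · exact h'
        · rcases mul_eq_zero.mp h' with h'' | h''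
          · exact absurd h'' ht
          · exact absurd h'' hsum
      subst hb; subst hc
      have hd : d = 1 ∨ d = -1 := by
        have hq : (d - 1) * (d + 1) * ((d - 1) * (d + 1)) = 0 := by linear_combination h11
        have h' : (d - 1) * (d + 1) = 0 := by
          rcases mul_eq_zero.mp hq with h' | h' <;> exact h'
        rcases mul_eq_zero.mp h' with h' | h'
        · left; linarith
        · right; linarith
      have ha : a = Real.sqrt 2 ∨ a = -Real.sqrt 2 ∨ a = 0 := by
        have hfac : a * a * ((a - Real.sqrt 2) * (a + Real.sqrt 2)) = 0 := by
          linear_combination h00 - a*a*h2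
        rcases mul_eq_zero.mp hfac with h' | h'
        · right; right
          rcases mul_eq_zero.mp h' with h' | h' <;> exact h'
        · rcases mul_eq_zero.mp h' with h' | h'
          · left; linarith
          · right; left; linarith
      rcases ha with rfl | rfl | rfl <;> rcases hd with rfl | rfl <;> simp
    · rintro (rfl | rfl | rfl | rfl | rfl | rfl) <;>
        rw [key_diag] <;> rw [fin2_ext_iff] <;>
        refine ⟨by nlinarith [hm], rfl, rfl, by norm_num⟩
  rw [hset]
  have hne : Real.sqrt 2 ≠ -Real.sqrt 2 := by intro h; nlinarith
  have hne2 : -Real.sqrt 2 ≠ Real.sqrt 2 := Ne.symm hne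
  rw [Set.encard_insert_of_notMem (by
        simp only [Set.mem_insert_iff, Set.mem_singleton_iff, fin2_ext_iff]
        push_neg
        norm_num [hne, hs.ne', hs.ne]),
      Set.encard_insert_of_notMem (by
        simp only [Set.mem_insert_iff, Set.mem_singleton_iff, fin2_ext_iff]
        push_neg
        norm_num [hne, hs.ne', hs.ne]),
      Set.encard_insert_of_notMem (by
        simp only [Set.mem_insert_iff, Set.mem_singleton_iff, fin2_ext_iff]
        push_neg
        norm_num [hne2, hs.ne', hs.ne, hs.ne.symm]),
      Set.encard_insert_of_notMem (by
        simp only [Set.mem_insert_iff, Set.mem_singleton_iff, fin2_ext_iff]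
        push_neg
        norm_num [hne2, hs.ne, hs.ne.symm]),
      Set.encard_pair (by
        simp only [ne_eq, fin2_ext_iff]
        push_neg
        norm_num)]
  rfl
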